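/- arXiv:2106.15437 — 3 statements merged into one kernel-verified Lean document; each statement's English description precedes it below -/
import Mathlib

section
/- Let Ψ = (ψ_1, …, ψ_t) be nonzero linear forms ℤ^D → ℤ, s ≥ 1, and κ_0 > 0. Let f_1, …, f_t : {1,…,N} → ℂ be bounded in magnitude by 1 (zero outside {1,…,N}), let K ⊆ ({-N,…,N})^D satisfy |K| ≥ κ_0 N^D, and let c ∈ ℤ be such that ψ_i(x) + c ∈ {1,…,N} for all x ∈ K and all i. Then there is a constant C depending only on Ψ, s, D, t, κ_0 such that |𝔼_{x ∈ K} ∏_{i=1}^t f_i(ψ_i(x) + c)| ≤ C · N^{1/4} · min_i ‖f_i‖_{U^{s+1}[N]}. -/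
open Finset Pointwise

/-- The Gowers `U^d(A)` norm of `f : ℤ → ℂ` relative to a finite set `A ⊆ ℤ`. -/
noncomputable def gowersNorm (A : Finset ℤ) (d : ℕ) (f : ℤ → ℂ) : ℝ :=
  (((∑ p ∈ (A ×ˢ Fintype.piFinset fun _ : Fin d => A - A).filter
        (fun p => ∀ ω : Finset (Fin d), p.1 + ∑ i ∈ ω, p.2 i ∈ A),
      ∏ ω : Finset (Fin d),
        if ω.card % 2 = 0 then f (p.1 + ∑ i ∈ ω, p.2 i)
        else (starRingEnd ℂ) (f (p.1 + ∑ i ∈ ω, p.2 i))) /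
      (((A ×ˢ Fintype.piFinset fun _ : Fin d => A - A).filter
        (fun p => ∀ ω : Finset (Fin d), p.1 + ∑ i ∈ ω, p.2 i ∈ A)).card : ℂ)).re) ^
    ((1 : ℝ) / 2 ^ d)

lemma card_filter_even_finsets (n : ℕ) (hn : n ≠ 0) :
    ((univ : Finset (Finset (Fin n))).filter fun ω => ω.card % 2 = 0).card = 2^(n-1) ∧
    ((univ : Finset (Finset (Fin n))).filter fun ω => ¬ ω.card % 2 = 0).card = 2^(n-1) := by
  have h0 : ∑ ω : Finset (Fin n), ((-1:ℤ)) ^ ω.card = 0 := by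
    have := Finset.sum_powerset_neg_one_pow_card_of_nonempty
      (x := (univ : Finset (Fin n))) (by simpa [Finset.univ_nonempty_iff] using Fin.pos_iff_nonempty.mp (Nat.pos_of_ne_zero hn))
    rwa [powerset_univ] at this
  have hsplit := Finset.sum_filter_add_sum_filter_not (univ : Finset (Finset (Fin n)))
    (fun ω => ω.card % 2 = 0) (fun ω => ((-1:ℤ)) ^ ω.card)
  rw [h0] at hsplit
  have h1 : ∑ ω ∈ (univ : Finset (Finset (Fin n))).filter (fun ω => ω.card % 2 = 0),
      ((-1:ℤ)) ^ ω.card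
      = ((univ : Finset (Finset (Fin n))).filter fun ω => ω.card % 2 = 0).card := by
    rw [Finset.sum_congr rfl (fun ω hω => ?_), Finset.sum_const, nsmul_eq_mul, mul_one]
    have := (Finset.mem_filter.mp hω).2
    exact Even.neg_one_pow (Nat.even_iff.mpr this)
  have h2 : ∑ ω ∈ (univ : Finset (Finset (Fin n))).filter (fun ω => ¬ ω.card % 2 = 0),
      ((-1:ℤ)) ^ ω.card
      = -((univ : Finset (Finset (Fin n))).filter fun ω => ¬ ω.card % 2 = 0).card := by
    rw [Finset.sum_congr rfl (fun ω hω => ?_), Finset.sum_const, nsmul_eq_mul, mul_neg_one]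
    have := (Finset.mem_filter.mp hω).2
    exact Odd.neg_one_pow (Nat.odd_iff.mpr (by omega))
  rw [h1, h2] at hsplit
  have hcard := Finset.card_filter_add_card_filter_not
    (s := (univ : Finset (Finset (Fin n)))) (p := fun ω => ω.card % 2 = 0)
  have htot : (univ : Finset (Finset (Fin n))).card = 2 ^ n := by
    rw [Finset.card_univ, Fintype.card_finset, Fintype.card_fin]
  have h2n : 2 ^ n = 2 * 2 ^ (n-1) := by
    obtain ⟨k, rfl⟩ := Nat.exists_eq_succ_of_ne_zero hn
    simp [pow_succ, mul_comm]
  omega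

lemma sum_piFinset_cons {B : Finset ℤ} {s : ℕ} (F : (Fin (s+1) → ℤ) → ℂ) :
    ∑ h ∈ Fintype.piFinset (fun _ : Fin (s+1) => B), F h
      = ∑ a ∈ B, ∑ k ∈ Fintype.piFinset (fun _ : Fin s => B), F (Fin.cons a k) := by
  rw [← Finset.sum_product (f := fun p => F (Fin.cons p.1 p.2))]
  refine Finset.sum_nbij' (i := fun h => ((h 0 : ℤ), Fin.tail h))
    (j := fun p => Fin.cons p.1 p.2) ?_ ?_ ?_ ?_ ?_
  · intro h hh
    simp only [Fintype.mem_piFinset] at hh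
    simp only [Finset.mem_product, Fintype.mem_piFinset]
    exact ⟨hh 0, fun i => hh i.succ⟩
  · intro p hp
    simp only [Finset.mem_product, Fintype.mem_piFinset] at hp
    simp only [Fintype.mem_piFinset]
    intro i
    refine Fin.cases ?_ ?_ i
    · simpa using hp.1
    · intro i; simpa using hp.2 i
  · intro h _; exact Fin.cons_self_tail h
  · intro p _; simp
  · intro h _; rw [Fin.cons_self_tail]

lemma prod_finset_fin_succ {s : ℕ} (g : Finset (Fin (s+1)) → ℂ) :
    ∏ ω : Finset (Fin (s+1)), g ω
      = ∏ ω : Finset (Fin s),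
          (g (insert 0 (ω.map (Fin.succEmb s))) * g (ω.map (Fin.succEmb s))) := by
  have key : ∏ ω : Finset (Fin (s+1)), g ω
      = ∏ p : Finset (Fin s) × Bool,
          g (cond p.2 (insert 0 (p.1.map (Fin.succEmb s))) (p.1.map (Fin.succEmb s))) := by
    refine Finset.prod_nbij'
      (i := fun ω => ((ω.preimage Fin.succ ((Fin.succ_injective s).injOn), decide ((0:Fin (s+1)) ∈ ω))))
      (j := fun p => cond p.2 (insert 0 (p.1.map (Fin.succEmb s))) (p.1.map (Fin.succEmb s)))
      (fun _ _ => Finset.mem_univ _) (fun _ _ => Finset.mem_univ _) ?_ ?_ ?_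
    · -- j (i ω) = ω
      intro ω _
      by_cases h0 : (0 : Fin (s+1)) ∈ ω
      · simp only [h0, decide_eq_true_eq, decide_true, cond_true]
        ext j
        refine Fin.cases ?_ ?_ j
        · simpa using h0
        · intro i
          simp [Finset.mem_map, Finset.mem_preimage, Fin.succ_ne_zero, Fin.succEmb,
            Fin.succ_inj]
      · simp only [h0, decide_eq_true_eq, decide_false, cond_false]
        ext j
        refine Fin.cases ?_ ?_ j
        · simpa [Fin.succ_ne_zero] using fun h => (h0 h).elim
        · intro i
          simp [Finset.mem_map, Finset.mem_preimage, Fin.succEmb, Fin.succ_inj]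
    · -- i (j p) = p
      rintro ⟨ω, b⟩ _
      cases b
      · simp only [cond_false]
        refine Prod.ext ?_ ?_
        · ext i
          simp [Finset.mem_preimage, Finset.mem_map, Fin.succEmb, Fin.succ_inj]
        · simp only [decide_eq_true_eq]
          simp [Finset.mem_map, Fin.succEmb, Fin.succ_ne_zero]
      · simp only [cond_true]
        refine Prod.ext ?_ ?_
        · ext i
          simp [Finset.mem_preimage, Finset.mem_map, Fin.succEmb, Fin.succ_inj,
            Fin.succ_ne_zero]
        · simp
    · intro ω _
      by_cases h0 : (0 : Fin (s+1)) ∈ ω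
      · simp only [h0, decide_eq_true_eq, decide_true, cond_true]
        congr 1
        ext j
        refine Fin.cases ?_ ?_ j
        · simpa using h0
        · intro i
          simp [Finset.mem_map, Finset.mem_preimage, Fin.succ_ne_zero, Fin.succEmb,
            Fin.succ_inj]
      · simp only [h0, decide_eq_true_eq, decide_false, cond_false]
        congr 1
        ext j
        refine Fin.cases ?_ ?_ j
        · simpa [Fin.succ_ne_zero] using fun h => (h0 h).elim
        · intro i
          simp [Finset.mem_map, Finset.mem_preimage, Fin.succEmb, Fin.succ_inj]
  rw [key, Fintype.prod_prod_type]
  refine Finset.prod_congr rfl fun ω _ => ?_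
  rw [Fintype.prod_bool]
  rfl

lemma gowers_lower (N s : ℕ) (hN : 1 ≤ N) (hs : 1 ≤ s) (f : ℤ → ℂ)
    (hf0 : ∀ x : ℤ, x ∉ Finset.Icc (1:ℤ) (N:ℤ) → f x = 0) :
    0 ≤ gowersNorm (Finset.Icc (1:ℤ) (N:ℤ)) (s+1) f ∧
    (∑ y ∈ Finset.Icc (1:ℤ) (N:ℤ), ‖f y‖ ^ (2^s)) ^ 2 ≤
      gowersNorm (Finset.Icc (1:ℤ) (N:ℤ)) (s+1) f ^ (2^(s+1)) * (2^(s+1) * (N:ℝ)^(s+2)) := by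
  classical
  unfold gowersNorm
  set A : Finset ℤ := Finset.Icc (1:ℤ) (N:ℤ) with hA
  set B : Finset ℤ := A - A with hB
  set Dom : Finset (ℤ × (Fin (s+1) → ℤ)) := A ×ˢ Fintype.piFinset fun _ : Fin (s+1) => B
    with hDom
  set Flt : Finset (ℤ × (Fin (s+1) → ℤ)) :=
    Dom.filter (fun p => ∀ ω : Finset (Fin (s+1)), p.1 + ∑ i ∈ ω, p.2 i ∈ A) with hFlt
  set T : ℤ × (Fin (s+1) → ℤ) → ℂ := fun p => ∏ ω : Finset (Fin (s+1)),
    if ω.card % 2 = 0 then f (p.1 + ∑ i ∈ ω, p.2 i)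
    else (starRingEnd ℂ) (f (p.1 + ∑ i ∈ ω, p.2 i)) with hTdef
  set S : ℂ := Finset.sum Flt T with hS
  set M : ℕ := Flt.card with hM
  set Φ : ℤ → (Fin s → ℤ) → ℂ := fun y k => ∏ ω : Finset (Fin s),
    if ω.card % 2 = 0 then f (y + ∑ i ∈ ω, k i)
    else (starRingEnd ℂ) (f (y + ∑ i ∈ ω, k i)) with hΦ
  set P : ℝ := ∑ y ∈ A, ‖f y‖ ^ (2^s) with hP
  have hre : (S / (M:ℂ)).re = S.re / (M:ℝ) := by
    rw [show ((M:ℂ)) = ((M:ℝ):ℂ) by push_cast; rfl, Complex.div_ofReal_re]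
  rw [hre]
  -- basic membership facts
  have h1A : (1:ℤ) ∈ A := by
    simp only [hA, Finset.mem_Icc]
    exact ⟨le_refl _, by exact_mod_cast hN⟩
  have h0B : (0:ℤ) ∈ B := by
    have h := Finset.sub_mem_sub h1A h1A
    rwa [sub_self] at h
  have hΦ0 : ∀ (y : ℤ) (k : Fin s → ℤ), y ∉ A → Φ y k = 0 := by
    intro y k hy
    refine Finset.prod_eq_zero (Finset.mem_univ (∅ : Finset (Fin s))) ?_
    simp [hf0 y hy]
  have hΦdiag : ∀ y : ℤ, Φ y 0 = ((‖f y‖ ^ (2^s) : ℝ) : ℂ) := by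
    intro y
    have h1 : Φ y 0 = ∏ ω : Finset (Fin s),
        (if ω.card % 2 = 0 then f y else (starRingEnd ℂ) (f y)) := by
      refine Finset.prod_congr rfl fun ω _ => ?_
      simp
    rw [h1, Finset.prod_ite (fun _ => f y) (fun _ => (starRingEnd ℂ) (f y)),
      Finset.prod_const, Finset.prod_const,
      (card_filter_even_finsets s (by omega)).1, (card_filter_even_finsets s (by omega)).2,
      ← mul_pow, Complex.mul_conj, ← Complex.ofReal_pow]
    congr 1
    rw [Complex.normSq_eq_norm_sq, ← pow_mul]
    congr 1
    obtain ⟨k, rfl⟩ := Nat.exists_eq_succ_of_ne_zero (show s ≠ 0 by omega)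
    rw [pow_succ]
    simp [mul_comm]
  have hT : ∀ (x : ℤ) (h : Fin (s+1) → ℤ),
      T (x, h) = Φ x (Fin.tail h) * (starRingEnd ℂ) (Φ (x + h 0) (Fin.tail h)) := by
    intro x h
    rw [hTdef]
    simp only
    rw [prod_finset_fin_succ (g := fun ω => if ω.card % 2 = 0 then f (x + ∑ i ∈ ω, h i)
      else (starRingEnd ℂ) (f (x + ∑ i ∈ ω, h i))), hΦ]
    simp only [map_prod]
    rw [← Finset.prod_mul_distrib]
    refine Finset.prod_congr rfl fun ω _ => ?_
    have hnot : (0 : Fin (s+1)) ∉ ω.map (Fin.succEmb s) := by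
      simp [Finset.mem_map, Fin.succEmb, Fin.succ_ne_zero]
    rw [Finset.card_insert_of_notMem hnot, Finset.card_map,
      Finset.sum_insert hnot, Finset.sum_map]
    simp only [Fin.coe_succEmb, Fin.tail]
    by_cases hc : ω.card % 2 = 0
    · have hc1 : ¬ ((ω.card + 1) % 2 = 0) := by omega
      rw [if_pos hc, if_neg hc1, mul_comm, ← add_assoc, if_pos hc]
    · have hc1 : (ω.card + 1) % 2 = 0 := by omega
      rw [if_neg hc, if_pos hc1, mul_comm, ← add_assoc, if_neg hc, Complex.conj_conj]
  -- S as a sum of squares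
  have hSfull : S = ∑ p ∈ Dom, T p := by
    rw [hS, hFlt]
    refine Finset.sum_filter_of_ne ?_
    intro p _ hne ω
    by_contra hgood
    exact hne (Finset.prod_eq_zero (Finset.mem_univ ω) (by simp [hf0 _ hgood]))
  have hSsum : S = ∑ k ∈ Fintype.piFinset (fun _ : Fin s => B),
      ((Complex.normSq (∑ y ∈ A, Φ y k) : ℝ) : ℂ) := by
    rw [hSfull, hDom, Finset.sum_product]
    have hx : ∀ x ∈ A, (∑ h ∈ Fintype.piFinset (fun _ : Fin (s+1) => B), T (x, h))
        = ∑ k ∈ Fintype.piFinset (fun _ : Fin s => B),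
            Φ x k * (starRingEnd ℂ) (∑ y ∈ A, Φ y k) := by
      intro x hxA
      rw [sum_piFinset_cons (F := fun h => T (x, h))]
      have hcons : ∀ a ∈ B, ∀ k ∈ Fintype.piFinset (fun _ : Fin s => B),
          T (x, Fin.cons a k) = Φ x k * (starRingEnd ℂ) (Φ (x + a) k) := by
        intro a _ k _
        rw [hT]
        simp
      rw [Finset.sum_congr rfl (fun a ha => Finset.sum_congr rfl (fun k hk => hcons a ha k hk)),
        Finset.sum_comm]
      refine Finset.sum_congr rfl fun k _ => ?_
      rw [← Finset.mul_sum]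
      congr 1
      rw [map_sum]
      have hmap : ∑ a ∈ B, (starRingEnd ℂ) (Φ (x + a) k)
          = ∑ y ∈ B.map (addLeftEmbedding x), (starRingEnd ℂ) (Φ y k) := by
        rw [Finset.sum_map]
        rfl
      rw [hmap]
      refine (Finset.sum_subset ?_ ?_).symm
      · intro y hy
        rw [Finset.mem_map]
        exact ⟨y - x, Finset.sub_mem_sub hy hxA, by simp [addLeftEmbedding_apply]⟩
      · intro y _ hy
        rw [hΦ0 y k hy, map_zero]
    rw [Finset.sum_congr rfl hx, Finset.sum_comm]
    refine Finset.sum_congr rfl fun k _ => ?_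
    rw [← Finset.sum_mul, Complex.mul_conj]
  have hSre : S.re = ∑ k ∈ Fintype.piFinset (fun _ : Fin s => B),
      Complex.normSq (∑ y ∈ A, Φ y k) := by
    rw [hSsum, Complex.re_sum]
    simp
  have hΦ0sum : (∑ y ∈ A, Φ y 0) = (P : ℂ) := by
    rw [Finset.sum_congr rfl (fun y _ => hΦdiag y), hP]
    push_cast
    rfl
  have hSre_ge : P^2 ≤ S.re := by
    rw [hSre]
    have h0mem : (0 : Fin s → ℤ) ∈ Fintype.piFinset (fun _ : Fin s => B) := by
      simp only [Fintype.mem_piFinset]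
      intro i
      simpa using h0B
    calc P^2 = Complex.normSq (∑ y ∈ A, Φ y 0) := by
          rw [hΦ0sum, Complex.normSq_ofReal, sq]
      _ ≤ _ := Finset.single_le_sum (f := fun k => Complex.normSq (∑ y ∈ A, Φ y k)) (fun k _ => Complex.normSq_nonneg _) h0mem
  have hP0 : 0 ≤ P := Finset.sum_nonneg fun y _ => pow_nonneg (norm_nonneg _) _
  have hSre_nonneg : 0 ≤ S.re := le_trans (sq_nonneg P) hSre_ge
  -- cardinality bounds
  have hM1 : 1 ≤ M := by
    rw [hM]
    refine Finset.card_pos.mpr ⟨((1:ℤ), fun _ => 0), ?_⟩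
    rw [hFlt, Finset.mem_filter]
    constructor
    · rw [hDom, Finset.mem_product]
      refine ⟨h1A, ?_⟩
      simp only [Fintype.mem_piFinset]
      intro i
      exact h0B
    · intro ω
      simpa using h1A
  have hM0 : ((M:ℝ)) ≠ 0 := by
    have : (0:ℝ) < M := by exact_mod_cast hM1
    linarith
  have hcardA : A.card = N := by
    rw [hA, Int.card_Icc]
    omega
  have hcardB : B.card ≤ 2 * N := by
    have hsub : B ⊆ Finset.Icc (1 - (N:ℤ)) ((N:ℤ) - 1) := by
      intro y hy
      rw [hB, Finset.mem_sub] at hy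
      obtain ⟨a, ha, b, hb, rfl⟩ := hy
      rw [hA, Finset.mem_Icc] at ha hb
      rw [Finset.mem_Icc]
      omega
    have h := Finset.card_le_card hsub
    rw [Int.card_Icc] at h
    omega
  have hMle : (M:ℝ) ≤ 2^(s+1) * (N:ℝ)^(s+2) := by
    have h1 : M ≤ Dom.card := by
      rw [hM, hFlt]
      exact Finset.card_filter_le _ _
    have h2 : Dom.card = A.card * (B.card)^(s+1) := by
      rw [hDom, Finset.card_product, Fintype.card_piFinset]
      simp
    have h3 : M ≤ N * (2*N)^(s+1) := by
      calc M ≤ A.card * (B.card)^(s+1) := by rw [← h2]; exact h1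
        _ ≤ N * (2*N)^(s+1) := by
            rw [hcardA]
            exact Nat.mul_le_mul_left N (Nat.pow_le_pow_left hcardB _)
    calc (M:ℝ) ≤ ((N * (2*N)^(s+1) : ℕ) : ℝ) := by exact_mod_cast h3
      _ = 2^(s+1) * (N:ℝ)^(s+2) := by push_cast; ring
  -- conclude
  have hdiv0 : 0 ≤ S.re / (M:ℝ) := div_nonneg hSre_nonneg (Nat.cast_nonneg M)
  constructor
  · exact Real.rpow_nonneg hdiv0 _
  · have hXpow : (((S.re / (M:ℝ)) ^ ((1:ℝ)/2^(s+1)))) ^ (2^(s+1) : ℕ) = S.re / M := by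
      rw [← Real.rpow_natCast ((S.re / (M:ℝ)) ^ ((1:ℝ)/2^(s+1))) (2^(s+1)),
        ← Real.rpow_mul hdiv0]
      have hexp : ((1:ℝ)/2^(s+1)) * ((2^(s+1):ℕ):ℝ) = 1 := by
        push_cast
        field_simp
      rw [hexp, Real.rpow_one]
    rw [hXpow]
    calc P^2 ≤ S.re := hSre_ge
      _ = (S.re / M) * M := by field_simp
      _ ≤ (S.re/M) * (2^(s+1) * (N:ℝ)^(s+2)) := mul_le_mul_of_nonneg_left hMle hdiv0

lemma fiber_sum (D N : ℕ) (ψj : Fin D → ℤ) (hnz : ψj ≠ 0) (c : ℤ) (K : Finset (Fin D → ℤ))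
    (hK : ∀ x ∈ K, ∀ jj, x jj ∈ Finset.Icc (-(N:ℤ)) (N:ℤ))
    (g : ℤ → ℝ) (hg : ∀ y, 0 ≤ g y)
    (hrange : ∀ x ∈ K, (∑ j', ψj j' * x j') + c ∈ Finset.Icc (1:ℤ) (N:ℤ)) :
    ∑ x ∈ K, g ((∑ j', ψj j' * x j') + c)
      ≤ ((2*N+1 : ℕ) : ℝ)^(D-1) * ∑ y ∈ Finset.Icc (1:ℤ) (N:ℤ), g y := by
  classical
  obtain ⟨j0, hj0⟩ : ∃ j0, ψj j0 ≠ 0 := Function.ne_iff.mp hnz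
  set φ : (Fin D → ℤ) → ℤ := fun x => (∑ j', ψj j' * x j') + c with hφ
  have hfiber : ∀ y : ℤ, (K.filter (fun x => φ x = y)).card ≤ (2*N+1)^(D-1) := by
    intro y
    have hmaps : ∀ x ∈ K.filter (fun x => φ x = y),
        (fun (i : {i : Fin D // i ≠ j0}) => x i.val) ∈
          Fintype.piFinset (fun _ : {i : Fin D // i ≠ j0} => Finset.Icc (-(N:ℤ)) (N:ℤ)) := by
      intro x hx
      simp only [Fintype.mem_piFinset]
      intro i
      exact hK x (Finset.mem_filter.mp hx).1 i.val
    have hinj : Set.InjOn (fun (x : Fin D → ℤ) (i : {i : Fin D // i ≠ j0}) => x i.val)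
        (K.filter (fun x => φ x = y)) := by
      intro x hx x' hx' heq
      have hxy := (Finset.mem_filter.mp hx).2
      have hxy' := (Finset.mem_filter.mp hx').2
      funext i
      by_cases hi : i = j0
      · subst hi
        have hsum : ∑ j', ψj j' * x j' = ∑ j', ψj j' * x' j' := by
          have : φ x = φ x' := by rw [hxy, hxy']
          rw [hφ] at this
          simpa using this
        rw [← Finset.add_sum_erase _ _ (Finset.mem_univ i),
          ← Finset.add_sum_erase _ _ (Finset.mem_univ i)] at hsum
        have herase : ∑ j' ∈ Finset.univ.erase i, ψj j' * x j'
            = ∑ j' ∈ Finset.univ.erase i, ψj j' * x' j' := by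
          refine Finset.sum_congr rfl fun k hk => ?_
          have hki : k ≠ i := (Finset.mem_erase.mp hk).1
          rw [show x k = x' k from congrFun heq ⟨k, hki⟩]
        have : ψj i * x i = ψj i * x' i := by omega
        exact mul_left_cancel₀ hj0 this
      · exact congrFun heq ⟨i, hi⟩
    have hcard := Finset.card_le_card_of_injOn _ hmaps hinj
    have hc1 : (Fintype.piFinset (fun _ : {i : Fin D // i ≠ j0} =>
        Finset.Icc (-(N:ℤ)) (N:ℤ))).card = (2*N+1)^(D-1) := by
      rw [Fintype.card_piFinset]
      rw [Finset.prod_const]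
      have h1 : (Finset.Icc (-(N:ℤ)) (N:ℤ)).card = 2*N+1 := by
        rw [Int.card_Icc]; omega
      have h2 : Fintype.card {i : Fin D // i ≠ j0} = D - 1 := by
        have := Fintype.card_subtype_compl (p := fun i : Fin D => i = j0)
        simpa [Fintype.card_subtype_eq] using this
      rw [h1, Finset.card_univ, h2]
    omega
  calc ∑ x ∈ K, g (φ x)
      = ∑ y ∈ K.image φ, (K.filter fun x => φ x = y).card • g y := Finset.sum_comp g φ
    _ ≤ ∑ y ∈ K.image φ, (((2*N+1:ℕ))^(D-1) : ℝ) * g y := by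
        refine Finset.sum_le_sum fun y _ => ?_
        rw [nsmul_eq_mul]
        refine mul_le_mul_of_nonneg_right ?_ (hg y)
        exact_mod_cast hfiber y
    _ ≤ ∑ y ∈ Finset.Icc (1:ℤ) (N:ℤ), (((2*N+1:ℕ))^(D-1) : ℝ) * g y := by
        refine Finset.sum_le_sum_of_subset_of_nonneg ?_ ?_
        · intro y hy
          obtain ⟨x, hxK, rfl⟩ := Finset.mem_image.mp hy
          exact hrange x hxK
        · intro y _ _
          exact mul_nonneg (by positivity) (hg y)
    _ = ((2*N+1 : ℕ) : ℝ)^(D-1) * ∑ y ∈ Finset.Icc (1:ℤ) (N:ℤ), g y := by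
        rw [← Finset.mul_sum]

/-- Lemma 2.2 (`l:smallN`): `|𝔼_{x ∈ K} ∏ᵢ fᵢ(ψᵢ(x)+c)| ≤ C N^{1/4} minᵢ ‖fᵢ‖_{U^{s+1}[N]}`. -/
theorem small_N_bound (D t s : ℕ) (hs : 1 ≤ s)
    (ψ : Fin t → Fin D → ℤ) (hnz : ∀ i, ψ i ≠ 0)
    (κ₀ : ℝ) (hκ₀ : 0 < κ₀) :
    ∃ C : ℝ, ∀ N : ℕ, 1 ≤ N →
      ∀ f : Fin t → ℤ → ℂ,
        (∀ i x, ‖f i x‖ ≤ 1) →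
        (∀ i x, x ∉ Finset.Icc (1 : ℤ) (N : ℤ) → f i x = 0) →
        ∀ K : Finset (Fin D → ℤ),
          (∀ x ∈ K, ∀ j, x j ∈ Finset.Icc (-(N : ℤ)) (N : ℤ)) →
          κ₀ * (N : ℝ) ^ D ≤ (K.card : ℝ) →
          ∀ c : ℤ,
            (∀ x ∈ K, ∀ i, (∑ j, ψ i j * x j) + c ∈ Finset.Icc (1 : ℤ) (N : ℤ)) →
            ∀ j : Fin t,
              ‖(∑ x ∈ K, ∏ i, f i ((∑ j', ψ i j' * x j') + c)) / (K.card : ℂ)‖ ≤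
                C * (N : ℝ) ^ ((1 : ℝ) / 4) *
                  gowersNorm (Finset.Icc (1 : ℤ) (N : ℤ)) (s + 1) (f j) := by
  classical
  obtain ⟨u, rfl⟩ : ∃ u, s = u + 1 := ⟨s - 1, by omega⟩
  rcases Nat.eq_zero_or_pos D with hD0 | hDpos
  · subst hD0
    refine ⟨1, ?_⟩
    intro N hN f hf1 hf0 K hK hKcard c hrange j
    exact absurd (funext fun i : Fin 0 => i.elim0) (hnz j)
  obtain ⟨D', rfl⟩ : ∃ D', D = D' + 1 := ⟨D - 1, by omega⟩
  set C : ℝ := 3^D' * 2 * max κ₀⁻¹ 1 with hC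
  refine ⟨C, ?_⟩
  intro N hN f hf1 hf0 K hK hKcard c hrange j
  set n : ℝ := (N:ℝ) with hn
  have hn1 : (1:ℝ) ≤ n := by rw [hn]; exact_mod_cast hN
  have hn0 : (0:ℝ) < n := by linarith
  set m : ℕ := 2^(u+2) with hm
  set A : Finset ℤ := Finset.Icc (1:ℤ) (N:ℤ) with hA
  set G : ℝ := gowersNorm A (u+1+1) (f j) with hG
  obtain ⟨hG0, hGlow⟩ := gowers_lower N (u+1) hN (by omega) (f j) (hf0 j)
  set P : ℝ := ∑ y ∈ A, ‖f j y‖ ^ (2^(u+1)) with hPdef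
  set Q : ℝ := ∑ y ∈ A, ‖f j y‖ with hQdef
  have hQ0 : 0 ≤ Q := Finset.sum_nonneg fun y _ => norm_nonneg _
  have hAcard : A.card = N := by rw [hA, Int.card_Icc]; omega
  have hQpow : Q^(2^(u+1)) ≤ n^(2^(u+1)-1) * P := by
    have h := pow_sum_div_card_le_sum_pow (s := A) (f := fun y => ‖f j y‖)
      (fun y _ => norm_nonneg _) (2^(u+1)-1)
    have he : (2^(u+1)-1)+1 = 2^(u+1) := by
      have := Nat.one_le_two_pow (n := u+1)
      omega
    rw [he] at h
    have hach : (0:ℝ) < ((A.card : ℕ):ℝ)^(2^(u+1)-1) := by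
      rw [hAcard]
      positivity
    rw [div_le_iff₀ hach] at h
    calc Q^(2^(u+1)) ≤ P * ((A.card:ℕ):ℝ)^(2^(u+1)-1) := h
      _ = n^(2^(u+1)-1) * P := by rw [hAcard]; ring
  -- bound the numerator
  have hKpos : (0:ℝ) < (K.card : ℝ) := lt_of_lt_of_le (by positivity) hKcard
  rw [norm_div, Complex.norm_natCast]
  set a : ℝ := ((2*N+1 : ℕ):ℝ) with ha
  have hnorm : ‖∑ x ∈ K, ∏ i, f i ((∑ j', ψ i j' * x j') + c)‖ ≤ a^D' * Q := by
    have h1 : ‖∑ x ∈ K, ∏ i, f i ((∑ j', ψ i j' * x j') + c)‖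
        ≤ ∑ x ∈ K, ‖f j ((∑ j', ψ j j' * x j') + c)‖ := by
      refine (norm_sum_le _ _).trans (Finset.sum_le_sum fun x hx => ?_)
      rw [norm_prod]
      calc ∏ i, ‖f i ((∑ j', ψ i j' * x j') + c)‖
          = ‖f j ((∑ j', ψ j j' * x j') + c)‖
            * ∏ i ∈ Finset.univ.erase j, ‖f i ((∑ j', ψ i j' * x j') + c)‖ :=
            (Finset.mul_prod_erase _ _ (Finset.mem_univ j)).symm
        _ ≤ ‖f j ((∑ j', ψ j j' * x j') + c)‖ * 1 := by
            refine mul_le_mul_of_nonneg_left ?_ (norm_nonneg _)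
            exact Finset.prod_le_one (fun i _ => norm_nonneg _) (fun i _ => hf1 i _)
        _ = ‖f j ((∑ j', ψ j j' * x j') + c)‖ := mul_one _
    have h2 := fiber_sum (D'+1) N (ψ j) (hnz j) c K hK (fun y => ‖f j y‖)
      (fun y => norm_nonneg _) (fun x hx => hrange x hx j)
    rw [hQdef, ha]
    have h2' := h1.trans h2
    simpa using h2'
  have hX : ‖∑ x ∈ K, ∏ i, f i ((∑ j', ψ i j' * x j') + c)‖ / (K.card:ℝ)
      ≤ (a^D' * Q) / (κ₀ * n^(D'+1)) := by
    refine div_le_div₀ (by positivity) hnorm (by positivity) hKcard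
  -- final power comparison
  have hquarter : (n ^ ((1:ℝ)/4))^m = n^(2^u) := by
    rw [← Real.rpow_natCast (n ^ ((1:ℝ)/4)) m, ← Real.rpow_mul (le_of_lt hn0),
      ← Real.rpow_natCast n (2^u)]
    congr 1
    push_cast [hm]
    rw [pow_succ, pow_succ]
    ring
  have hClow : (3:ℝ)^(D'*m) * 2^(u+2) ≤ C^m * κ₀^m := by
    have h1 : (1:ℝ) ≤ max κ₀⁻¹ 1 * κ₀ := by
      calc (1:ℝ) = κ₀⁻¹ * κ₀ := by field_simp
        _ ≤ max κ₀⁻¹ 1 * κ₀ := by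
            exact mul_le_mul_of_nonneg_right (le_max_left _ _) (le_of_lt hκ₀)
    have h2 : ((3:ℝ)^D' * 2)^m ≤ (C * κ₀)^m := by
      refine pow_le_pow_left₀ (by positivity) ?_ m
      calc (3:ℝ)^D' * 2 = 3^D' * 2 * 1 := by ring
        _ ≤ 3^D' * 2 * (max κ₀⁻¹ 1 * κ₀) := by
            refine mul_le_mul_of_nonneg_left h1 (by positivity)
        _ = C * κ₀ := by rw [hC]; ring
    calc (3:ℝ)^(D'*m) * 2^(u+2) ≤ (3:ℝ)^(D'*m) * 2^m := by
          refine mul_le_mul_of_nonneg_left ?_ (by positivity)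
          refine pow_le_pow_right₀ one_le_two ?_
          calc u+2 ≤ 2^(u+2) := le_of_lt (Nat.lt_two_pow_self (n := _))
            _ = m := hm.symm
      _ = ((3:ℝ)^D' * 2)^m := by rw [mul_pow, ← pow_mul]
      _ ≤ (C * κ₀)^m := h2
      _ = C^m * κ₀^m := mul_pow _ _ _
  have hq1 : 1 ≤ 2^(u+1) := Nat.one_le_two_pow
  have hmq : m = 2 * 2^(u+1) := by rw [hm, pow_succ]; ring
  have hfin : (a^D' * Q)^m
      ≤ (C * n^((1:ℝ)/4) * G)^m * (κ₀ * n^(D'+1))^m := by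
    have hstep : (a^D' * Q)^m ≤ (3*n)^(D'*m)
        * (n^((2^(u+1)-1)*2) * (G^m * (2^(u+2) * n^(u+3)))) := by
      calc (a^D' * Q)^m = a^(D'*m) * Q^m := by rw [mul_pow, ← pow_mul]
        _ = a^(D'*m) * (Q^(2^(u+1)))^2 := by
            have hmq' : 2^(u+1)*2 = m := by rw [hm]; ring
            rw [← pow_mul, hmq']
        _ ≤ a^(D'*m) * (n^(2^(u+1)-1) * P)^2 := by
            refine mul_le_mul_of_nonneg_left ?_ (by positivity)
            exact pow_le_pow_left₀ (by positivity) hQpow 2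
        _ = a^(D'*m) * (n^((2^(u+1)-1)*2) * P^2) := by rw [mul_pow, ← pow_mul]
        _ ≤ a^(D'*m) * (n^((2^(u+1)-1)*2) * (G^m * (2^(u+2) * n^(u+3)))) := by
            refine mul_le_mul_of_nonneg_left ?_ (by positivity)
            refine mul_le_mul_of_nonneg_left ?_ (by positivity)
            exact hGlow
        _ ≤ (3*n)^(D'*m) * (n^((2^(u+1)-1)*2) * (G^m * (2^(u+2) * n^(u+3)))) := by
            have haux : 0 ≤ n^((2^(u+1)-1)*2) * (G^m * (2^(u+2) * n^(u+3))) := by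
              have : (0:ℝ) ≤ G^m := pow_nonneg hG0 _
              positivity
            refine mul_le_mul_of_nonneg_right ?_ haux
            refine pow_le_pow_left₀ (by positivity) ?_ _
            rw [ha, hn]
            push_cast
            have : (1:ℝ) ≤ (N:ℝ) := by exact_mod_cast hN
            linarith
    have hexp : D'*m + ((2^(u+1)-1)*2 + (u+3)) = (D'*m + m) + (u+1) := by
      have h2 := hmq
      omega
    have hGm0 : (0:ℝ) ≤ G^m := pow_nonneg hG0 _
    calc (a^D' * Q)^m ≤ (3*n)^(D'*m)
        * (n^((2^(u+1)-1)*2) * (G^m * (2^(u+2) * n^(u+3)))) := hstep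
      _ = (3^(D'*m) * 2^(u+2)) * (n^(D'*m + ((2^(u+1)-1)*2 + (u+3)))) * G^m := by
          rw [mul_pow, pow_add, pow_add]
          ring
      _ = (3^(D'*m) * 2^(u+2)) * (n^(D'*m + m) * n^(u+1)) * G^m := by
          rw [hexp, pow_add n (D'*m + m) (u+1)]
      _ ≤ (C^m * κ₀^m) * (n^(D'*m + m) * n^(2^u)) * G^m := by
          refine mul_le_mul_of_nonneg_right ?_ hGm0
          refine mul_le_mul hClow ?_ (by positivity) (by positivity)
          refine mul_le_mul_of_nonneg_left ?_ (by positivity)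
          refine pow_le_pow_right₀ hn1 ?_
          have := Nat.lt_two_pow_self (n := u)
          omega
      _ = (C * n^((1:ℝ)/4) * G)^m * (κ₀ * n^(D'+1))^m := by
          have h1 : (C * n^((1:ℝ)/4) * G)^m = C^m * (n^((1:ℝ)/4))^m * G^m := by
            rw [mul_pow, mul_pow]
          have h2 : (κ₀ * n^(D'+1))^m = κ₀^m * n^((D'+1)*m) := by
            rw [mul_pow, ← pow_mul]
          have h3 : (D'+1)*m = D'*m + m := by ring
          rw [h1, h2, hquarter, h3, pow_add]
          ring
  -- conclude
  have hY0 : 0 ≤ C * n^((1:ℝ)/4) * G := by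
    have hC0 : (0:ℝ) ≤ C := by rw [hC]; positivity
    have : (0:ℝ) ≤ n^((1:ℝ)/4) := Real.rpow_nonneg (le_of_lt hn0) _
    exact mul_nonneg (mul_nonneg hC0 this) hG0
  refine le_of_pow_le_pow_left₀ (n := m) (by positivity) hY0 ?_
  calc (‖∑ x ∈ K, ∏ i, f i ((∑ j', ψ i j' * x j') + c)‖ / (K.card:ℝ))^m
      ≤ ((a^D' * Q) / (κ₀ * n^(D'+1)))^m := pow_le_pow_left₀ (by positivity) hX m
    _ = (a^D' * Q)^m / (κ₀ * n^(D'+1))^m := div_pow _ _ _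
    _ ≤ (C * n^((1:ℝ)/4) * G)^m := by
        rw [div_le_iff₀ (by positivity)]
        exact hfin
end

section
/- Fix D ≥ 1 and L ≥ 1. There is a constant C depending only on D and L such that the following holds. Let ψ : ℤ^D → ℤ be a nonzero linear form with coefficients of magnitude at most L, let c ∈ ℤ, let q ≥ 1, let ε' > 0 with ε'N a positive integer, and let 𝒫 be a collection of pairwise disjoint sets P = P_1 × ⋯ × P_D ⊆ ({-N,…,N})^D, where each P_j is an arithmetic progression of common difference q containing ε'N integers. Suppose moreover that the sets of 𝒫 are grouped into axis-aligned lattice cubes of side length qε'N with pairwise disjoint interiors, each such cube being exactly partitioned by q^D members of 𝒫. Then for every n ∈ ℤ, the number of P ∈ 𝒫 with n ∈ ψ(P) + c is at most C · ε'^{-(D-1)}. -/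
open Finset

/-- `Q` is an axis-aligned lattice cube in `ℤ^D` of side length `m`. -/
def IsLatticeCube (D m : ℕ) (Q : Finset (Fin D → ℤ)) : Prop :=
  ∃ a : Fin D → ℤ, Q = Fintype.piFinset fun j => Finset.Ico (a j) (a j + (m : ℤ))

/-- `P` is a product `P₁ × ⋯ × P_D` where each `Pⱼ` is an arithmetic progression
of common difference `q` containing `m` integers. -/
def IsProgBox (D q m : ℕ) (P : Finset (Fin D → ℤ)) : Prop :=
  ∃ a : Fin D → ℤ,
    P = Fintype.piFinset fun j => (Finset.range m).image fun k : ℕ => a j + (q : ℤ) * (k : ℤ)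

lemma ap_coord (q m : ℕ) (hq : 0 < q) (hm : 0 < m) (a b : ℤ)
    (h : ((Finset.range m).image fun k : ℕ => b + (q:ℤ) * k) ⊆ Finset.Ico a (a + (q:ℤ)*m)) :
    ((Finset.range m).image fun k : ℕ => b + (q:ℤ) * k)
      = (Finset.Ico a (a + (q:ℤ)*m)).filter (fun y => y % (q:ℤ) = b % (q:ℤ)) := by
  have hq' : (0:ℤ) < q := by exact_mod_cast hq
  have hb0 : b ∈ Finset.Ico a (a + (q:ℤ)*m) := by
    apply h
    simp only [mem_image, mem_range]
    exact ⟨0, hm, by ring⟩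
  have hbtop : b + (q:ℤ)*((m:ℤ)-1) ∈ Finset.Ico a (a + (q:ℤ)*m) := by
    apply h
    simp only [mem_image, mem_range]
    refine ⟨m - 1, by omega, ?_⟩
    push_cast [Nat.cast_sub hm]
    ring
  rw [mem_Ico] at hb0 hbtop
  have hba : a ≤ b := hb0.1
  have hbq : b < a + q := by nlinarith [hbtop.2]
  apply Finset.Subset.antisymm
  · intro y hy
    rw [mem_filter]
    refine ⟨h hy, ?_⟩
    simp only [mem_image, mem_range] at hy
    obtain ⟨k, _, rfl⟩ := hy
    simp [Int.add_mul_emod_self_left]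
  · intro y hy
    rw [mem_filter, mem_Ico] at hy
    obtain ⟨⟨hya, hyb⟩, hmod⟩ := hy
    have hdvd : (q:ℤ) ∣ y - b := Int.dvd_of_emod_eq_zero
      (Int.emod_eq_emod_iff_emod_sub_eq_zero.mp hmod)
    obtain ⟨k, hk⟩ := hdvd
    have hk0 : 0 ≤ k := by nlinarith
    have hkm : k < m := by nlinarith
    simp only [mem_image, mem_range]
    refine ⟨k.toNat, by omega, ?_⟩
    rw [Int.toNat_of_nonneg hk0]
    omega

lemma box_eq_filter (D q m : ℕ) (hq : 0 < q) (hm : 0 < m) (b a : Fin D → ℤ)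
    (hsub : (Fintype.piFinset fun j => (Finset.range m).image fun k : ℕ => b j + (q:ℤ) * k)
      ⊆ Fintype.piFinset fun j => Finset.Ico (a j) (a j + ((q*m:ℕ):ℤ))) :
    (Fintype.piFinset fun j => (Finset.range m).image fun k : ℕ => b j + (q:ℤ) * k)
      = (Fintype.piFinset fun j => Finset.Ico (a j) (a j + ((q*m:ℕ):ℤ))).filter
          (fun x => ∀ j, x j % (q:ℤ) = b j % (q:ℤ)) := by
  classical
  have hqm : ∀ j, (a j + ((q*m:ℕ):ℤ)) = a j + (q:ℤ)*m := by intro j; push_cast; ring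
  have hcoord : ∀ j, ((Finset.range m).image fun k : ℕ => b j + (q:ℤ) * k)
      ⊆ Finset.Ico (a j) (a j + (q:ℤ)*m) := by
    intro j y hy
    have hb : ∀ j', b j' ∈ (Finset.range m).image fun k : ℕ => b j' + (q:ℤ) * k := by
      intro j'
      simp only [mem_image, mem_range]
      exact ⟨0, hm, by ring⟩
    have hx : (Function.update b j y) ∈
        (Fintype.piFinset fun j => (Finset.range m).image fun k : ℕ => b j + (q:ℤ) * k) := by
      rw [Fintype.mem_piFinset]
      intro j'
      by_cases hj : j' = j
      · subst hj; simpa using hy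
      · simpa [Function.update_of_ne hj] using hb j'
    have := (Fintype.mem_piFinset.mp (hsub hx)) j
    simpa [hqm j] using this
  have hc : ∀ j, ((Finset.range m).image fun k : ℕ => b j + (q:ℤ) * k)
      = (Finset.Ico (a j) (a j + (q:ℤ)*m)).filter (fun y => y % (q:ℤ) = b j % (q:ℤ)) :=
    fun j => ap_coord q m hq hm (a j) (b j) (hcoord j)
  ext x
  simp only [Fintype.mem_piFinset, mem_filter, hqm, hc, mem_Ico]
  constructor
  · intro h
    exact ⟨fun j => (h j).1, fun j => (h j).2⟩
  · intro h j
    exact ⟨h.1 j, h.2 j⟩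

lemma key_count {D : ℕ} (ψ : Fin D → ℤ) (j0 : Fin D) (hj0 : ψ j0 ≠ 0)
    (S : Fin D → Finset ℤ) (cond : (Fin D → ℤ) → Prop) [DecidablePred cond]
    (g : ℤ → ℤ) (T : Finset ℤ)
    (hmem : ∀ x ∈ Fintype.piFinset S, cond x → g (∑ j, ψ j * x j) ∈ T)
    (hg : ∀ x ∈ Fintype.piFinset S, cond x → ∀ y ∈ Fintype.piFinset S, cond y →
      g (∑ j, ψ j * x j) = g (∑ j, ψ j * y j) → (∑ j, ψ j * x j) = (∑ j, ψ j * y j)) :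
    ((Fintype.piFinset S).filter cond).card ≤ T.card * ∏ j ∈ univ.erase j0, (S j).card := by
  classical
  have hcard : (Fintype.piFinset fun j => if j = j0 then T else S j).card
      = T.card * ∏ j ∈ univ.erase j0, (S j).card := by
    rw [Fintype.card_piFinset]
    rw [← Finset.mul_prod_erase univ _ (mem_univ j0)]
    simp only [if_pos rfl]
    congr 1
    apply Finset.prod_congr rfl
    intro j hj
    rw [if_neg (Finset.mem_erase.mp hj).1]
  rw [← hcard]
  apply Finset.card_le_card_of_injOn
    (fun x => fun j => if j = j0 then g (∑ j', ψ j' * x j') else x j)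
  · intro x hx
    rw [mem_coe, mem_filter] at hx
    rw [mem_coe, Fintype.mem_piFinset]
    intro j
    by_cases hj : j = j0
    · subst hj
      simp only [if_pos rfl]
      exact hmem x hx.1 hx.2
    · simp only [if_neg hj]
      exact Fintype.mem_piFinset.mp hx.1 j
  · intro x hx y hy hxy
    rw [mem_coe, mem_filter] at hx hy
    have hne : ∀ j, j ≠ j0 → x j = y j := by
      intro j hj
      have := congrFun hxy j
      simpa [if_neg hj] using this
    have hsum : (∑ j, ψ j * x j) = (∑ j, ψ j * y j) := by
      apply hg x hx.1 hx.2 y hy.1 hy.2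
      have := congrFun hxy j0
      simpa using this
    have hj0' : x j0 = y j0 := by
      have h1 : ψ j0 * x j0 + ∑ j ∈ univ.erase j0, ψ j * x j = ∑ j, ψ j * x j :=
        Finset.add_sum_erase univ (fun j => ψ j * x j) (mem_univ j0)
      have h2 : ψ j0 * y j0 + ∑ j ∈ univ.erase j0, ψ j * y j = ∑ j, ψ j * y j :=
        Finset.add_sum_erase univ (fun j => ψ j * y j) (mem_univ j0)
      have h3 : ∑ j ∈ univ.erase j0, ψ j * x j = ∑ j ∈ univ.erase j0, ψ j * y j := by
        apply Finset.sum_congr rfl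
        intro j hj
        rw [hne j (Finset.mem_erase.mp hj).1]
      have : ψ j0 * x j0 = ψ j0 * y j0 := by omega
      exact mul_left_cancel₀ hj0 this
    funext j
    by_cases hj : j = j0
    · subst hj; exact hj0'
    · exact hne j hj

lemma slab_count {D : ℕ} (ψ : Fin D → ℤ) (j0 : Fin D) (hj0 : ψ j0 ≠ 0) (N : ℕ) (lo hi : ℤ) :
    ((Fintype.piFinset fun _ : Fin D => Finset.Icc (-(N:ℤ)) N).filter
      (fun x => (∑ j, ψ j * x j) ∈ Finset.Icc lo hi)).card
    ≤ (Finset.Icc lo hi).card * (2*N+1)^(D-1) := by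
  classical
  refine le_trans (key_count ψ j0 hj0 _ _ id _ (fun x _ h => h) (fun _ _ _ _ _ _ h => h)) ?_
  apply le_of_eq
  congr 1
  rw [Finset.prod_const, Finset.card_erase_of_mem (mem_univ j0), card_univ, Fintype.card_fin]
  congr 1
  rw [Int.card_Icc]
  omega

lemma residue_count {D : ℕ} (ψ : Fin D → ℤ) (j0 : Fin D) (hj0 : ψ j0 ≠ 0)
    (L : ℕ) (hψL : ∀ j, |ψ j| ≤ (L:ℤ)) (q : ℕ) (hq : 0 < q) (v : ℤ) :
    ((Fintype.piFinset fun _ : Fin D => Finset.Ico (0:ℤ) q).filter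
      (fun r => ((∑ j, ψ j * r j) - v) % q = 0)).card ≤ (2*(D*L)+3) * q^(D-1) := by
  classical
  have hq' : (0:ℤ) < q := by exact_mod_cast hq
  have hdvd : ∀ x : Fin D → ℤ, ((∑ j, ψ j * x j) - v) % q = 0 →
      (q:ℤ) ∣ ((∑ j, ψ j * x j) - v % q) := by
    intro x hx
    have h1 : (q:ℤ) ∣ ((∑ j, ψ j * x j) - v) := Int.dvd_of_emod_eq_zero hx
    have h2 : (q:ℤ) ∣ (v - v % q) := by
      refine ⟨v / q, ?_⟩
      rw [Int.emod_def]
      ring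
    have := dvd_add h1 h2
    simpa using this
  refine le_trans (key_count ψ j0 hj0 _ _ (fun s => (s - v % q) / q)
    (Finset.Icc (-(((D*L+1:ℕ)):ℤ)) (((D*L+1:ℕ)):ℤ)) ?_ ?_) ?_
  · intro x hx hc
    obtain ⟨t, ht⟩ := hdvd x hc
    have hbound : |(∑ j, ψ j * x j)| ≤ (D:ℤ) * L * ((q:ℤ)-1) := by
      refine le_trans (Finset.abs_sum_le_sum_abs _ _) ?_
      have : ∀ j : Fin D, |ψ j * x j| ≤ (L:ℤ) * ((q:ℤ)-1) := by
        intro j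
        rw [abs_mul]
        have hx' := Fintype.mem_piFinset.mp hx j
        rw [mem_Ico] at hx'
        have : |x j| ≤ (q:ℤ) - 1 := by rw [abs_le]; omega
        exact mul_le_mul (hψL j) this (abs_nonneg _) (by positivity)
      refine le_trans (Finset.sum_le_sum (fun j _ => this j)) ?_
      rw [Finset.sum_const, card_univ, Fintype.card_fin, nsmul_eq_mul]
      nlinarith [hq']
    have hv : 0 ≤ v % q ∧ v % q < q := ⟨Int.emod_nonneg v (by positivity), Int.emod_lt_of_pos v hq'⟩
    have htb : -(((D*L+1:ℕ)):ℤ) ≤ t ∧ t ≤ ((D*L+1:ℕ):ℤ) := by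
      push_cast
      constructor <;> nlinarith [abs_le.mp hbound, hv.1, hv.2, ht]
    show ((∑ j, ψ j * x j) - v % (q:ℤ)) / (q:ℤ) ∈
      Finset.Icc (-(((D*L+1:ℕ)):ℤ)) (((D*L+1:ℕ)):ℤ)
    rw [ht, Int.mul_ediv_cancel_left _ (by positivity : (q:ℤ) ≠ 0)]
    exact mem_Icc.mpr htb
  · intro x hx hcx y hy hcy hxy
    have h1 := Int.ediv_mul_cancel (hdvd x hcx)
    have h2 := Int.ediv_mul_cancel (hdvd y hcy)
    have : ((∑ j, ψ j * x j) - v % (q:ℤ)) = ((∑ j, ψ j * y j) - v % (q:ℤ)) := by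
      rw [← h1, ← h2, hxy]
    omega
  · have h1 : (Finset.Icc (-(((D*L+1:ℕ)):ℤ)) (((D*L+1:ℕ)):ℤ)).card = 2*(D*L)+3 := by
      rw [Int.card_Icc]; omega
    rw [h1, Finset.prod_const, Finset.card_erase_of_mem (mem_univ j0), card_univ,
      Fintype.card_fin, Int.card_Ico]
    have h2 : ((q:ℤ) - 0).toNat = q := by omega
    rw [h2]

lemma mem_box_emod {D q m : ℕ} (b : Fin D → ℤ) (x : Fin D → ℤ)
    (hx : x ∈ Fintype.piFinset fun j => (Finset.range m).image fun k : ℕ => b j + (q:ℤ)*k) :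
    ∀ j, x j % (q:ℤ) = b j % (q:ℤ) := by
  intro j
  have := Fintype.mem_piFinset.mp hx j
  simp only [mem_image, mem_range] at this
  obtain ⟨k, _, hk⟩ := this
  rw [← hk]
  simp [Int.add_mul_emod_self_left]

lemma base_mem_box {D q m : ℕ} (hm : 0 < m) (b : Fin D → ℤ) :
    b ∈ Fintype.piFinset fun j => (Finset.range m).image fun k : ℕ => b j + (q:ℤ)*k := by
  rw [Fintype.mem_piFinset]
  intro j
  simp only [mem_image, mem_range]
  exact ⟨0, hm, by ring⟩

lemma rho_box {D q m : ℕ} (hm : 0 < m) (b : Fin D → ℤ) (P : Finset (Fin D → ℤ))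
    (hP : P = Fintype.piFinset fun j => (Finset.range m).image fun k : ℕ => b j + (q:ℤ)*k)
    (j : Fin D) :
    ((P.image fun x => x j % (q:ℤ)).sum id) = b j % (q:ℤ) := by
  have himg : P.image (fun x => x j % (q:ℤ)) = {b j % (q:ℤ)} := by
    apply Finset.Subset.antisymm
    · intro y hy
      simp only [mem_image] at hy
      obtain ⟨x, hx, rfl⟩ := hy
      rw [hP] at hx
      simp [mem_box_emod b x hx j]
    · intro y hy
      rw [Finset.mem_singleton] at hy
      subst hy
      simp only [mem_image]
      exact ⟨b, by rw [hP]; exact base_mem_box hm b, rfl⟩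
  rw [himg, Finset.sum_singleton, id]

/-- Lemma 2.5 (`l:gtfix`): for each `n ∈ ℤ`, at most `O(ε'^{-(D-1)})` of the progression
boxes `P ∈ Ps` satisfy `n ∈ ψ(P) + c`. -/
theorem few_boxes_hit (D L : ℕ) (hD : 1 ≤ D) (hL : 1 ≤ L) :
    ∃ C : ℝ, ∀ (N q m : ℕ) (ε' : ℝ), 1 ≤ N → 1 ≤ q → 0 < m → 0 < ε' → (m : ℝ) = ε' * N →
      ∀ (ψ : Fin D → ℤ), ψ ≠ 0 → (∀ j, |ψ j| ≤ (L : ℤ)) →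
      ∀ c : ℤ,
      ∀ Ps : Finset (Finset (Fin D → ℤ)),
        (∀ P ∈ Ps, IsProgBox D q m P) →
        (∀ P ∈ Ps, ∀ x ∈ P, ∀ j, x j ∈ Finset.Icc (-(N : ℤ)) (N : ℤ)) →
        (Ps : Set (Finset (Fin D → ℤ))).PairwiseDisjoint id →
        -- the boxes of `Ps` are grouped into pairwise disjoint lattice cubes of side `q·m`,
        -- each cube exactly partitioned by `q^D` members of `Ps`
        (∃ 𝒞 : Finset (Finset (Fin D → ℤ)),
          (∀ Q ∈ 𝒞, IsLatticeCube D (q * m) Q) ∧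
          (𝒞 : Set (Finset (Fin D → ℤ))).PairwiseDisjoint id ∧
          (∀ P ∈ Ps, ∃ Q ∈ 𝒞, P ⊆ Q) ∧
          (∀ Q ∈ 𝒞, (Ps.filter fun P => P ⊆ Q).card = q ^ D ∧
            ∀ x ∈ Q, ∃ P ∈ Ps, P ⊆ Q ∧ x ∈ P)) →
        ∀ n : ℤ,
          ((Ps.filter fun P => ∃ x ∈ P, (∑ j, ψ j * x j) + c = n).card : ℝ) ≤
            C / ε' ^ (D - 1) := by
  refine ⟨((((2*(D*L)+3) * (3*(D*L)) * 3^(D-1)) : ℕ) : ℝ), ?_⟩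
  intro N q m ε' hN hq hm hε' hεN ψ hψ hψL c Ps hPs1 hPs2 hPsDisj h𝒞ex n
  obtain ⟨𝒞, h𝒞1, h𝒞2, h𝒞3, h𝒞4⟩ := h𝒞ex
  obtain ⟨j0, hj0'⟩ := Function.ne_iff.mp hψ
  have hj0 : ψ j0 ≠ 0 := by simpa using hj0'
  obtain ⟨v, hv⟩ : ∃ v : ℤ, v = n - c := ⟨_, rfl⟩
  obtain ⟨hitC, hhitC⟩ : ∃ hitC, hitC = 𝒞.filter (fun Q => ∃ x ∈ Q, (∑ j, ψ j * x j) + c = n) :=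
    ⟨_, rfl⟩
  -- Step 2 : slab count for cubes
  have step2 : hitC.card * (q*m)^D ≤ (2*(D*L*(q*m))+1) * (2*N+1)^(D-1) := by
    have hQcard : ∀ Q ∈ hitC, Q.card = (q*m)^D := by
      intro Q hQ
      rw [hhitC, Finset.mem_filter] at hQ
      obtain ⟨aQ, hQeq⟩ := h𝒞1 Q hQ.1
      rw [hQeq, Fintype.card_piFinset]
      have hcard : ∀ j : Fin D, (Finset.Ico (aQ j) (aQ j + ((q*m:ℕ):ℤ))).card = q*m := by
        intro j; rw [Int.card_Ico]; omega
      rw [Finset.prod_congr rfl (fun j _ => hcard j), Finset.prod_const, card_univ,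
        Fintype.card_fin]
    have hdisj : ∀ Q ∈ hitC, ∀ R ∈ hitC, Q ≠ R → Disjoint (id Q) (id R) := by
      intro Q hQ R hR hne
      rw [hhitC] at hQ hR
      exact h𝒞2 (Finset.mem_coe.mpr (Finset.mem_of_mem_filter Q hQ))
        (Finset.mem_coe.mpr (Finset.mem_of_mem_filter R hR)) hne
    have hcup : (hitC.biUnion id).card = hitC.card * (q*m)^D := by
      rw [Finset.card_biUnion hdisj]
      simp only [id_eq]
      rw [Finset.sum_congr rfl hQcard, Finset.sum_const, smul_eq_mul]
    have hsubslab : hitC.biUnion id ⊆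
        (Fintype.piFinset fun _ : Fin D => Finset.Icc (-(N:ℤ)) N).filter
          (fun x => (∑ j, ψ j * x j) ∈
            Finset.Icc (v - ((D*L*(q*m):ℕ):ℤ)) (v + ((D*L*(q*m):ℕ):ℤ))) := by
      intro x hx
      rw [Finset.mem_biUnion] at hx
      obtain ⟨Q, hQ, hxQ⟩ := hx
      rw [hhitC, Finset.mem_filter] at hQ
      obtain ⟨hQC, y, hyQ, hyn⟩ := hQ
      obtain ⟨P, hPPs, hPQ, hxP⟩ := (h𝒞4 Q hQC).2 x (by exact hxQ)
      obtain ⟨aQ, hQeq⟩ := h𝒞1 Q hQC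
      have hsig : (∑ j, ψ j * y j) = v := by omega
      have hxQ' : x ∈ Fintype.piFinset fun j => Finset.Ico (aQ j) (aQ j + ((q*m:ℕ):ℤ)) := by
        rw [← hQeq]; exact hxQ
      have hyQ' : y ∈ Fintype.piFinset fun j => Finset.Ico (aQ j) (aQ j + ((q*m:ℕ):ℤ)) := by
        rw [← hQeq]; exact hyQ
      have hxy : ∀ j, |x j - y j| ≤ ((q*m : ℕ):ℤ) - 1 := by
        intro j
        have h1 := Fintype.mem_piFinset.mp hxQ' j
        have h2 := Fintype.mem_piFinset.mp hyQ' j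
        rw [mem_Ico] at h1 h2
        rw [abs_le]
        omega
      have hdiff : |(∑ j, ψ j * x j) - v| ≤ ((D*L*(q*m) : ℕ):ℤ) := by
        rw [← hsig, ← Finset.sum_sub_distrib]
        have heq : ∀ j : Fin D, ψ j * x j - ψ j * y j = ψ j * (x j - y j) := fun j => by ring
        rw [Finset.sum_congr rfl (fun j _ => heq j)]
        refine le_trans (Finset.abs_sum_le_sum_abs _ _) ?_
        have hterm : ∀ j : Fin D, |ψ j * (x j - y j)| ≤ (L:ℤ) * (((q*m:ℕ):ℤ) - 1) := by
          intro j
          rw [abs_mul]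
          exact mul_le_mul (hψL j) (hxy j) (abs_nonneg _) (by positivity)
        refine le_trans (Finset.sum_le_sum (fun j _ => hterm j)) ?_
        rw [Finset.sum_const, card_univ, Fintype.card_fin, nsmul_eq_mul]
        have hqm1 : (1:ℤ) ≤ ((q*m:ℕ):ℤ) := by
          have : 1 ≤ q*m := Nat.mul_le_mul hq hm
          exact_mod_cast this
        push_cast
        nlinarith [hqm1, (show (0:ℤ) ≤ (L:ℤ) by positivity),
          (show (0:ℤ) ≤ (D:ℤ) by positivity), (show (0:ℤ) ≤ (D:ℤ)*(L:ℤ) by positivity)]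
      rw [Finset.mem_filter]
      constructor
      · rw [Fintype.mem_piFinset]
        exact fun j => hPs2 P hPPs x hxP j
      · rw [mem_Icc]
        have h := abs_le.mp hdiff
        constructor <;> omega
    calc hitC.card * (q*m)^D = (hitC.biUnion id).card := hcup.symm
      _ ≤ _ := Finset.card_le_card hsubslab
      _ ≤ (Finset.Icc (v - ((D*L*(q*m):ℕ):ℤ)) (v + ((D*L*(q*m):ℕ):ℤ))).card * (2*N+1)^(D-1) :=
          slab_count ψ j0 hj0 N _ _
      _ = (2*(D*L*(q*m))+1) * (2*N+1)^(D-1) := by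
          rw [Int.card_Icc]
          congr 1
          omega
  -- Step 1 : per-cube residue count
  have step1 : (Ps.filter fun P => ∃ x ∈ P, (∑ j, ψ j * x j) + c = n).card
      ≤ hitC.card * ((2*(D*L)+3) * q^(D-1)) := by
    have hsub : (Ps.filter fun P => ∃ x ∈ P, (∑ j, ψ j * x j) + c = n)
        ⊆ hitC.biUnion (fun Q =>
          (Ps.filter fun P => ∃ x ∈ P, (∑ j, ψ j * x j) + c = n).filter (· ⊆ Q)) := by
      intro P hP
      have hP' := Finset.mem_filter.mp hP
      obtain ⟨Q, hQ𝒞, hPQ⟩ := h𝒞3 P hP'.1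
      rw [Finset.mem_biUnion]
      refine ⟨Q, ?_, Finset.mem_filter.mpr ⟨hP, hPQ⟩⟩
      rw [hhitC, Finset.mem_filter]
      obtain ⟨x, hxP, hxn⟩ := hP'.2
      exact ⟨hQ𝒞, x, hPQ hxP, hxn⟩
    refine le_trans (Finset.card_le_card hsub) (le_trans Finset.card_biUnion_le ?_)
    have hper : ∀ Q ∈ hitC,
        ((Ps.filter fun P => ∃ x ∈ P, (∑ j, ψ j * x j) + c = n).filter (· ⊆ Q)).card
        ≤ (2*(D*L)+3) * q^(D-1) := by
      intro Q hQ
      rw [hhitC, Finset.mem_filter] at hQ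
      obtain ⟨aQ, hQeq⟩ := h𝒞1 Q hQ.1
      refine le_trans ?_ (residue_count ψ j0 hj0 L hψL q hq v)
      apply Finset.card_le_card_of_injOn
        (fun P => fun j => ((P.image fun x => x j % (q:ℤ)).sum id))
      · intro P hP
        rw [Finset.mem_coe, Finset.mem_filter, Finset.mem_filter] at hP
        obtain ⟨⟨hPPs, x, hxP, hxn⟩, hPQ⟩ := hP
        obtain ⟨b, hb⟩ := hPs1 P hPPs
        have hrho : ∀ j, ((P.image fun x => x j % (q:ℤ)).sum id) = b j % (q:ℤ) :=
          rho_box hm b P hb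
        have hq' : (0:ℤ) < q := by exact_mod_cast hq
        rw [Finset.mem_coe, Finset.mem_filter]
        constructor
        · rw [Fintype.mem_piFinset]
          intro j
          simp only [hrho j, mem_Ico]
          exact ⟨Int.emod_nonneg _ (ne_of_gt hq'), Int.emod_lt_of_pos _ hq'⟩
        · have hsig : (∑ j, ψ j * x j) = v := by omega
          have hmodx : ∀ j, x j % (q:ℤ) = b j % (q:ℤ) := by
            intro j
            exact mem_box_emod b x (by rw [← hb]; exact hxP) j
          have hd : (q:ℤ) ∣ ((∑ j, ψ j * (b j % (q:ℤ))) - (∑ j, ψ j * x j)) := by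
            rw [← Finset.sum_sub_distrib]
            apply Finset.dvd_sum
            intro j _
            have h1 : (b j % (q:ℤ)) % (q:ℤ) = x j % (q:ℤ) := by
              rw [Int.emod_emod_of_dvd _ (dvd_refl (q:ℤ)), hmodx j]
            have h2 : (q:ℤ) ∣ (b j % (q:ℤ) - x j) :=
              Int.dvd_of_emod_eq_zero (Int.emod_eq_emod_iff_emod_sub_eq_zero.mp h1)
            have h3 : ψ j * (b j % (q:ℤ)) - ψ j * x j = ψ j * (b j % (q:ℤ) - x j) := by ring
            rw [h3]
            exact Dvd.dvd.mul_left h2 (ψ j)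
          have hre : (∑ j, ψ j * ((P.image fun y => y j % (q:ℤ)).sum id))
              = ∑ j, ψ j * (b j % (q:ℤ)) :=
            Finset.sum_congr rfl (fun j _ => by rw [hrho j])
          show ((∑ j, ψ j * ((P.image fun y => y j % (q:ℤ)).sum id)) - v) % (q:ℤ) = 0
          rw [hre]
          have hstep : (∑ j, ψ j * (b j % (q:ℤ))) - v
              = (∑ j, ψ j * (b j % (q:ℤ))) - (∑ j, ψ j * x j) := by rw [hsig]
          rw [hstep]
          exact Int.emod_eq_zero_of_dvd hd
      · intro P hP P' hP' hPP'
        simp only [Finset.mem_coe, Finset.mem_filter] at hP hP'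
        obtain ⟨⟨hPPs, -⟩, hPQ⟩ := hP
        obtain ⟨⟨hP'Ps, -⟩, hP'Q⟩ := hP'
        obtain ⟨b, hb⟩ := hPs1 P hPPs
        obtain ⟨b', hb'⟩ := hPs1 P' hP'Ps
        have hbb' : ∀ j, b j % (q:ℤ) = b' j % (q:ℤ) := by
          intro j
          have e1 := rho_box hm b P hb j
          have e2 := rho_box (q := q) hm b' P' hb' j
          rw [← e1, ← e2]
          exact congrFun hPP' j
        rw [hQeq] at hPQ hP'Q
        rw [hb] at hPQ ⊢
        rw [hb'] at hP'Q ⊢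
        rw [box_eq_filter D q m hq hm b aQ hPQ, box_eq_filter D q m hq hm b' aQ hP'Q]
        apply Finset.filter_congr
        intro x _
        constructor
        · intro h j; rw [← hbb' j]; exact h j
        · intro h j; rw [hbb' j]; exact h j
    refine le_trans (Finset.sum_le_card_nsmul _ _ _ hper) ?_
    rw [smul_eq_mul]
  -- combine in ℕ
  have hD1 : D - 1 + 1 = D := Nat.succ_pred_eq_of_pos hD
  obtain ⟨X, hX⟩ : ∃ X, X = (Ps.filter fun P => ∃ x ∈ P, (∑ j, ψ j * x j) + c = n).card :=
    ⟨_, rfl⟩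
  rw [← hX]
  rw [← hX] at step1
  have hfin : X * m^(D-1) ≤ ((2*(D*L)+3) * (3*(D*L)) * 3^(D-1)) * N^(D-1) := by
    have c1 : X * (q*m)^D ≤ (hitC.card * ((2*(D*L)+3) * q^(D-1))) * (q*m)^D :=
      Nat.mul_le_mul_right _ step1
    have c2 : (hitC.card * ((2*(D*L)+3) * q^(D-1))) * (q*m)^D
        = ((2*(D*L)+3) * q^(D-1)) * (hitC.card * (q*m)^D) := by ring
    have c3 : ((2*(D*L)+3) * q^(D-1)) * (hitC.card * (q*m)^D)
        ≤ ((2*(D*L)+3) * q^(D-1)) * ((2*(D*L*(q*m))+1) * (2*N+1)^(D-1)) :=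
      Nat.mul_le_mul_left _ step2
    have c4 : (2*(D*L*(q*m))+1) ≤ 3*(D*L)*(q*m) := by
      have h1 : 1 ≤ D*L := Nat.mul_le_mul hD hL
      have h2 : 1 ≤ q*m := Nat.mul_le_mul hq hm
      have h3 : 1 ≤ D*L*(q*m) := Nat.mul_le_mul h1 h2
      linarith
    have c5 : (2*N+1)^(D-1) ≤ (3*N)^(D-1) := Nat.pow_le_pow_left (by linarith) _
    have c6 : ((2*(D*L)+3) * q^(D-1)) * ((2*(D*L*(q*m))+1) * (2*N+1)^(D-1))
        ≤ ((2*(D*L)+3) * q^(D-1)) * ((3*(D*L)*(q*m)) * (3*N)^(D-1)) :=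
      Nat.mul_le_mul_left _ (Nat.mul_le_mul c4 c5)
    have hqD : q^(D-1) * q = q^D := by rw [← pow_succ, hD1]
    have hmD : m^(D-1) * m = m^D := by rw [← pow_succ, hD1]
    have c7 : ((2*(D*L)+3) * q^(D-1)) * ((3*(D*L)*(q*m)) * (3*N)^(D-1))
        = (((2*(D*L)+3) * (3*(D*L)) * 3^(D-1)) * N^(D-1)) * (q^D * m) := by
      rw [mul_pow 3 N, ← hqD]
      ring
    have c8 : X * (q*m)^D = (X * m^(D-1)) * (q^D * m) := by
      rw [mul_pow, ← hmD]
      ring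
    have cmain : (X * m^(D-1)) * (q^D * m)
        ≤ (((2*(D*L)+3) * (3*(D*L)) * 3^(D-1)) * N^(D-1)) * (q^D * m) := by
      rw [← c8, ← c7]
      exact le_trans c1 (le_trans (le_of_eq c2) (le_trans c3 c6))
    exact Nat.le_of_mul_le_mul_right cmain (by positivity)
  -- conclude over ℝ
  have hN0 : (0:ℝ) < N := by exact_mod_cast hN
  have hm0 : (0:ℝ) < m := by exact_mod_cast hm
  have hεeq : ε' = (m:ℝ)/(N:ℝ) := by
    rw [eq_div_iff (ne_of_gt hN0)]
    linarith [hεN]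
  rw [hεeq, div_pow, le_div_iff₀ (by positivity)]
  have hc : (X:ℝ) * (m:ℝ)^(D-1)
      ≤ (((2*(D*L)+3) * (3*(D*L)) * 3^(D-1) : ℕ):ℝ) * (N:ℝ)^(D-1) := by
    exact_mod_cast hfin
  calc (X:ℝ) * ((m:ℝ)^(D-1)/(N:ℝ)^(D-1))
      = ((X:ℝ) * (m:ℝ)^(D-1))/(N:ℝ)^(D-1) := by ring
    _ ≤ ((((2*(D*L)+3) * (3*(D*L)) * 3^(D-1) : ℕ):ℝ) * (N:ℝ)^(D-1))/(N:ℝ)^(D-1) := by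
        gcongr
    _ = (((2*(D*L)+3) * (3*(D*L)) * 3^(D-1) : ℕ):ℝ) := by field_simp
end

section
/- Let Ψ = (ψ_1, …, ψ_t) be a system of linear forms ℤ^D → ℤ that is translation invariant, i.e. (1,…,1) ∈ Ψ^{[1]}. Then Ψ satisfies the flag condition: for all integers 1 ≤ k < l, Ψ^{[k]} ⊆ Ψ^{[l]}. -/
open Finset

/-- `Ψ^{[k]} = span_ℝ {(ψ₁(x)^k, …, ψ_t(x)^k) : x ∈ ℤ^D} ⊆ ℝ^t`. -/
def psiSpan (D t : ℕ) (ψ : Fin t → Fin D → ℤ) (k : ℕ) : Submodule ℝ (Fin t → ℝ) :=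
  Submodule.span ℝ {v : Fin t → ℝ | ∃ x : Fin D → ℤ,
    v = fun i => (∑ j, (ψ i j : ℝ) * (x j : ℝ)) ^ k}

lemma vand_extract {V : Type*} [AddCommGroup V] [Module ℝ V] (W : Submodule ℝ V)
    (m : ℕ) (v : Fin (m + 1) → V)
    (h : ∀ n : Fin (m + 1), (∑ j : Fin (m + 1), ((n : ℕ) : ℝ) ^ (j : ℕ) • v j) ∈ W) :
    ∀ j, v j ∈ W := by
  set A := Matrix.vandermonde (fun n : Fin (m + 1) => ((n : ℕ) : ℝ)) with hA
  have hdet : A.det ≠ 0 := by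
    rw [hA, Matrix.det_vandermonde]
    refine Finset.prod_ne_zero_iff.2 fun i _ => Finset.prod_ne_zero_iff.2 fun j hj => ?_
    have hij : i < j := Finset.mem_Ioi.1 hj
    have : ((i : ℕ) : ℝ) < ((j : ℕ) : ℝ) := by exact_mod_cast hij
    exact sub_ne_zero.2 (ne_of_gt this)
  have hinv : A⁻¹ * A = 1 := Matrix.nonsing_inv_mul A (Ne.isUnit hdet)
  intro j
  have key : v j = ∑ n : Fin (m + 1), A⁻¹ j n • ∑ i : Fin (m + 1), A n i • v i := by
    have : ∑ n : Fin (m + 1), A⁻¹ j n • ∑ i : Fin (m + 1), A n i • v i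
        = ∑ i : Fin (m + 1), ((A⁻¹ * A) j i) • v i := by
      calc ∑ n : Fin (m + 1), A⁻¹ j n • ∑ i : Fin (m + 1), A n i • v i
          = ∑ n : Fin (m + 1), ∑ i : Fin (m + 1), (A⁻¹ j n * A n i) • v i := by
            simp only [Finset.smul_sum, smul_smul]
        _ = ∑ i : Fin (m + 1), ∑ n : Fin (m + 1), (A⁻¹ j n * A n i) • v i :=
            Finset.sum_comm
        _ = ∑ i : Fin (m + 1), ((A⁻¹ * A) j i) • v i := by
            simp only [Matrix.mul_apply, Finset.sum_smul]
    rw [this, hinv]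
    simp [Matrix.one_apply]
  rw [key]
  refine Submodule.sum_mem W fun n _ => Submodule.smul_mem W _ ?_
  have := h n
  simpa [hA, Matrix.vandermonde] using this

lemma psi_prod_mem (D t : ℕ) (ψ : Fin t → Fin D → ℤ) (k : ℕ) (x y : Fin D → ℤ) :
    (fun i => (∑ j, (ψ i j : ℝ) * (x j : ℝ)) ^ k * (∑ j, (ψ i j : ℝ) * (y j : ℝ)))
      ∈ psiSpan D t ψ (k + 1) := by
  set L : Fin t → (Fin D → ℤ) → ℝ := fun i z => ∑ j, (ψ i j : ℝ) * (z j : ℝ) with hL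
  set m := k + 1 with hm
  set v : Fin (m + 1) → (Fin t → ℝ) := fun r => fun i =>
    ((m.choose (r : ℕ) : ℝ)) * (L i x) ^ (m - (r : ℕ)) * (L i y) ^ (r : ℕ) with hv
  have h : ∀ n : Fin (m + 1),
      (∑ r : Fin (m + 1), ((n : ℕ) : ℝ) ^ (r : ℕ) • v r) ∈ psiSpan D t ψ m := by
    intro n
    have hgen : (fun i => (∑ j, (ψ i j : ℝ) * (((x + (n : ℕ) • y) j : ℤ) : ℝ)) ^ m)
        ∈ psiSpan D t ψ m := Submodule.subset_span ⟨x + (n : ℕ) • y, rfl⟩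
    have heq : (∑ r : Fin (m + 1), ((n : ℕ) : ℝ) ^ (r : ℕ) • v r)
        = fun i => (∑ j, (ψ i j : ℝ) * (((x + (n : ℕ) • y) j : ℤ) : ℝ)) ^ m := by
      funext i
      have hsum : (∑ j, (ψ i j : ℝ) * (((x + (n : ℕ) • y) j : ℤ) : ℝ))
          = L i x + ((n : ℕ) : ℝ) * L i y := by
        simp only [hL, Pi.add_apply, Pi.smul_apply, nsmul_eq_mul]
        push_cast
        rw [Finset.mul_sum, ← Finset.sum_add_distrib]
        congr 1; funext j; simp only [Pi.mul_apply, Pi.natCast_apply]; push_cast; ring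
      rw [hsum, add_comm (L i x), add_pow]
      rw [Finset.sum_apply]
      rw [← Fin.sum_univ_eq_sum_range
        (fun r => (((n : ℕ) : ℝ) * L i y) ^ r * L i x ^ (m - r) * (m.choose r : ℝ))]
      refine Finset.sum_congr rfl fun r _ => ?_
      simp only [hv, Pi.smul_apply, smul_eq_mul, mul_pow]
      ring
    rw [heq]; exact hgen
  have h1 : v ⟨1, by omega⟩ ∈ psiSpan D t ψ m := vand_extract _ m v h 1
  have : ((m : ℝ)⁻¹) • v ⟨1, by omega⟩
      = fun i => (L i x) ^ k * (L i y) := by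
    funext i
    simp only [hv, Pi.smul_apply, smul_eq_mul, Nat.choose_one_right, pow_one]
    have hm1 : m - 1 = k := by omega
    rw [hm1]
    have : (m : ℝ) ≠ 0 := by positivity
    field_simp
  rw [← this]
  exact Submodule.smul_mem _ _ h1

lemma step (D t : ℕ) (ψ : Fin t → Fin D → ℤ)
    (hti : (fun _ : Fin t => (1 : ℝ)) ∈ psiSpan D t ψ 1) (k : ℕ) :
    psiSpan D t ψ k ≤ psiSpan D t ψ (k + 1) := by
  rw [psiSpan, Submodule.span_le]
  rintro v ⟨x, rfl⟩
  set L : Fin t → (Fin D → ℤ) → ℝ := fun i z => ∑ j, (ψ i j : ℝ) * (z j : ℝ) with hL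
  let mulmap : (Fin t → ℝ) →ₗ[ℝ] (Fin t → ℝ) :=
    { toFun := fun c i => (L i x) ^ k * c i
      map_add' := by intro a b; funext i; simp [mul_add]
      map_smul' := by intro r a; funext i; simp; ring }
  have hsub : psiSpan D t ψ 1 ≤ (psiSpan D t ψ (k + 1)).comap mulmap := by
    rw [psiSpan, Submodule.span_le]
    rintro c ⟨y, rfl⟩
    have := psi_prod_mem D t ψ k x y
    simp only [Submodule.mem_comap, SetLike.mem_coe]
    convert this using 1
    funext i
    simp [mulmap, hL]
  have := hsub hti
  simp only [Submodule.mem_comap] at this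
  rw [SetLike.mem_coe]
  convert this using 1
  funext i
  simp [mulmap, hL]

/-- A translation invariant system of linear forms satisfies the flag condition:
`Ψ^{[k]} ⊆ Ψ^{[l]}` for all `1 ≤ k < l`. -/
theorem translation_invariant_implies_flag (D t : ℕ) (ψ : Fin t → Fin D → ℤ)
    (hti : (fun _ : Fin t => (1 : ℝ)) ∈ psiSpan D t ψ 1) :
    ∀ k l : ℕ, 1 ≤ k → k < l → psiSpan D t ψ k ≤ psiSpan D t ψ l := by
  intro k l _ hkl
  induction l with
  | zero => omega
  | succ n ih =>
    rcases Nat.lt_succ_iff_lt_or_eq.1 hkl with h | h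
    · exact le_trans (ih h) (step D t ψ hti n)
    · subst h; exact step D t ψ hti k
end
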